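/- For every m ≥ 1, the 2m-th moment of the measure μ with density k(x:r) equals 1 − √(1−r²) · Σ_{k=0}^{m−1} C(2k, k) (r²/4)^k, where C(2k,k) is the central binomial coefficient. In particular s_0 = 1. -/

import Mathlib

open Real intervalIntegral MeasureTheory Set

lemma konno_prod (k : ℕ) :
    (∏ i ∈ Finset.range k, ((2*(i:ℝ)+1)/(2*i+2))) = (Nat.choose (2*k) k : ℝ) / 4^k := by
  induction k with
  | zero => simp
  | succ n ih =>
    rw [Finset.prod_range_succ, ih]
    have h := Nat.succ_mul_centralBinom_succ n
    have h' : ((n:ℝ)+1) * (Nat.choose (2*(n+1)) (n+1) : ℝ) = 2*(2*n+1) * (Nat.choose (2*n) n : ℝ) := by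
      have := congrArg (Nat.cast : ℕ → ℝ) h
      push_cast [Nat.centralBinom] at this
      push_cast
      convert this using 2 <;> ring_nf
    have h4 : (4:ℝ)^n ≠ 0 := by positivity
    have hn1 : ((n:ℝ)+1) ≠ 0 := by positivity
    field_simp
    linear_combination (-2*(4:ℝ)^n) * h'

lemma konno_sin_pow (k : ℕ) :
    (∫ θ in (-(π/2))..(π/2), Real.sin θ ^ (2*k)) = π * (Nat.choose (2*k) k : ℝ) / 4^k := by
  have hcont : Continuous fun θ : ℝ => Real.sin θ ^ (2*k) := (Real.continuous_sin.pow _)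
  have h1 : (∫ θ in (-(π/2))..(0:ℝ), Real.sin θ ^ (2*k)) = ∫ θ in (0:ℝ)..(π/2), Real.sin θ ^ (2*k) := by
    have := intervalIntegral.integral_comp_neg (a := (0:ℝ)) (b := π/2) (fun x => Real.sin x ^ (2*k))
    simp only [neg_zero] at this
    rw [← this]
    congr 1; funext x
    rw [Real.sin_neg]
    rw [Even.neg_pow (by exact even_two_mul k)]
  have h2 : (∫ θ in (π/2)..π, Real.sin θ ^ (2*k)) = ∫ θ in (0:ℝ)..(π/2), Real.sin θ ^ (2*k) := by
    have t := intervalIntegral.integral_comp_sub_left (a := (0:ℝ)) (b := π/2) (fun x => Real.sin x ^ (2*k)) π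
    simp only [sub_zero] at t
    rw [show π - π/2 = π/2 by ring] at t
    rw [← t]
    congr 1; funext x; rw [Real.sin_pi_sub]
  have hsplit : (∫ θ in (-(π/2))..(π/2), Real.sin θ ^ (2*k))
      = (∫ θ in (-(π/2))..(0:ℝ), Real.sin θ ^ (2*k)) + ∫ θ in (0:ℝ)..(π/2), Real.sin θ ^ (2*k) :=
    (intervalIntegral.integral_add_adjacent_intervals (hcont.intervalIntegrable _ _)
      (hcont.intervalIntegrable _ _)).symm
  have hsplit2 : (∫ θ in (0:ℝ)..π, Real.sin θ ^ (2*k))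
      = (∫ θ in (0:ℝ)..(π/2), Real.sin θ ^ (2*k)) + ∫ θ in (π/2)..π, Real.sin θ ^ (2*k) :=
    (intervalIntegral.integral_add_adjacent_intervals (hcont.intervalIntegrable _ _)
      (hcont.intervalIntegrable _ _)).symm
  have : (∫ θ in (-(π/2))..(π/2), Real.sin θ ^ (2*k)) = ∫ θ in (0:ℝ)..π, Real.sin θ ^ (2*k) := by
    rw [hsplit, hsplit2, h1, h2]
  rw [this, integral_sin_pow_even, konno_prod]
  ring

lemma konno_inv_integral (r : ℝ) (hr0 : 0 < r) (hr1 : r < 1) :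
    (∫ θ in (-(π/2))..(π/2), (1 - (r * Real.sin θ)^2)⁻¹) = π / Real.sqrt (1 - r^2) := by
  set c := Real.sqrt (1 - r^2) with hc
  have h1r : (0:ℝ) < 1 - r^2 := by nlinarith
  have hcpos : 0 < c := Real.sqrt_pos.mpr h1r
  have hc2 : c^2 = 1 - r^2 := Real.sq_sqrt h1r.le
  have hpos : ∀ θ : ℝ, 0 < 1 - (r * Real.sin θ)^2 := by
    intro θ
    have := Real.sin_sq_le_one θ
    nlinarith
  have hcont : Continuous fun θ : ℝ => (1 - (r * Real.sin θ)^2)⁻¹ := by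
    apply Continuous.inv₀
    · continuity
    · exact fun θ => (hpos θ).ne'
  set F : ℝ → ℝ := fun θ => c⁻¹ * Real.arctan (c * Real.tan θ) with hF
  have hderiv : ∀ θ ∈ Ioo (-(π/2)) (π/2), HasDerivAt F ((1 - (r * Real.sin θ)^2)⁻¹) θ := by
    intro θ hθ
    have hcos : 0 < Real.cos θ := Real.cos_pos_of_mem_Ioo hθ
    have h1 : HasDerivAt (fun x => c * Real.tan x) (c * (1 / Real.cos θ ^ 2)) θ :=
      (Real.hasDerivAt_tan hcos.ne').const_mul c
    have h2 : HasDerivAt Real.arctan (1 / (1 + (c * Real.tan θ)^2)) (c * Real.tan θ) :=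
      Real.hasDerivAt_arctan _
    have h3 := (h2.comp θ h1).const_mul c⁻¹
    convert h3 using 1 <;> try rfl
    have key : (1 + (c * Real.tan θ)^2) * Real.cos θ ^ 2 = 1 - (r * Real.sin θ)^2 := by
      rw [Real.tan_eq_sin_div_cos]
      have hpy := Real.sin_sq_add_cos_sq θ
      field_simp
      nlinarith [hpy, hc2]
    have hne : (0:ℝ) < 1 + (c * Real.tan θ)^2 := by positivity
    rw [← key]
    field_simp
    try ring
  have hint : IntervalIntegrable (fun θ => (1 - (r * Real.sin θ)^2)⁻¹) volume (-(π/2)) (π/2) :=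
    hcont.intervalIntegrable _ _
  have ha : Filter.Tendsto F (nhdsWithin (-(π/2)) (Ioi (-(π/2)))) (nhds (c⁻¹ * (-(π/2)))) := by
    have t1 := Real.tendsto_tan_neg_pi_div_two
    have t2 : Filter.Tendsto (fun θ => c * Real.tan θ) (nhdsWithin (-(π/2)) (Ioi (-(π/2)))) Filter.atBot :=
      (Filter.tendsto_const_mul_atBot_of_pos hcpos).mpr t1
    have t3 : Filter.Tendsto Real.arctan Filter.atBot (nhds (-(π/2))) :=
      Real.tendsto_arctan_atBot.mono_right nhdsWithin_le_nhds
    exact (t3.comp t2).const_mul c⁻¹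
  have hb : Filter.Tendsto F (nhdsWithin (π/2) (Iio (π/2))) (nhds (c⁻¹ * (π/2))) := by
    have t1 := Real.tendsto_tan_pi_div_two
    have t2 : Filter.Tendsto (fun θ => c * Real.tan θ) (nhdsWithin (π/2) (Iio (π/2))) Filter.atTop :=
      (Filter.tendsto_const_mul_atTop_of_pos hcpos).mpr t1
    have t3 : Filter.Tendsto Real.arctan Filter.atTop (nhds (π/2)) :=
      Real.tendsto_arctan_atTop.mono_right nhdsWithin_le_nhds
    exact (t3.comp t2).const_mul c⁻¹
  have hab : -(π/2) < π/2 := by linarith [Real.pi_pos]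
  rw [intervalIntegral.integral_eq_sub_of_hasDerivAt_of_tendsto hab hderiv hint ha hb]
  field_simp
  ring

lemma konno_subst (r : ℝ) (hr0 : 0 < r) (hr1 : r < 1) (n : ℕ) :
    (∫ x in (-r)..r, x ^ n * (Real.sqrt (1 - r^2) / (Real.pi * (1 - x^2) * Real.sqrt (r^2 - x^2))))
    = ∫ θ in (-(π/2))..(π/2),
        Real.sqrt (1 - r^2) * (r * Real.sin θ) ^ n / (π * (1 - (r * Real.sin θ)^2)) := by
  set c := Real.sqrt (1 - r^2) with hc
  set g : ℝ → ℝ := fun x => x ^ n * (c / (Real.pi * (1 - x^2) * Real.sqrt (r^2 - x^2))) with hg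
  have hab : -(π/2) < π/2 := by linarith [Real.pi_pos]
  have hrr : -r < r := by linarith
  have hderiv : ∀ θ ∈ Ioo (-(π/2)) (π/2),
      HasDerivWithinAt (fun θ => r * Real.sin θ) (r * Real.cos θ) (Ioo (-(π/2)) (π/2)) θ :=
    fun θ _ => ((Real.hasDerivAt_sin θ).const_mul r).hasDerivWithinAt
  have hmono : StrictMonoOn (fun θ => r * Real.sin θ) (Icc (-(π/2)) (π/2)) :=
    fun a ha b hb hab => by
      exact mul_lt_mul_of_pos_left (Real.strictMonoOn_sin ha hb hab) hr0
  have hinj : InjOn (fun θ => r * Real.sin θ) (Ioo (-(π/2)) (π/2)) :=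
    (hmono.injOn).mono Ioo_subset_Icc_self
  have himg : (fun θ => r * Real.sin θ) '' Ioo (-(π/2)) (π/2) = Ioo (-r) r := by
    ext x
    constructor
    · rintro ⟨θ, hθ, rfl⟩
      have h1 : Real.sin θ < 1 := by
        have := Real.strictMonoOn_sin (Ioo_subset_Icc_self hθ) (right_mem_Icc.mpr hab.le) hθ.2
        simpa using this
      have h2 : -1 < Real.sin θ := by
        have := Real.strictMonoOn_sin (left_mem_Icc.mpr hab.le) (Ioo_subset_Icc_self hθ) hθ.1
        simpa using this
      show -r < r * Real.sin θ ∧ r * Real.sin θ < r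
      constructor <;> nlinarith
    · intro hx
      refine ⟨Real.arcsin (x / r), ⟨?_, ?_⟩, ?_⟩
      · rw [Real.neg_pi_div_two_lt_arcsin]
        rw [neg_lt, ← neg_div]
        exact (div_lt_one hr0).mpr (by linarith [hx.1])
      · rw [Real.arcsin_lt_pi_div_two]
        exact (div_lt_one hr0).mpr hx.2
      · simp only
        rw [Real.sin_arcsin]
        · field_simp
        · rw [neg_le, ← neg_div]; exact ((div_le_one hr0).mpr (by linarith [hx.1]))
        · exact (div_le_one hr0).mpr hx.2.le
  have hchange := MeasureTheory.integral_image_eq_integral_abs_deriv_smul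
    measurableSet_Ioo hderiv hinj g
  rw [himg] at hchange
  have hLHS : (∫ x in (-r)..r, g x) = ∫ x in Ioo (-r) r, g x := by
    rw [intervalIntegral.integral_of_le hrr.le, MeasureTheory.integral_Ioc_eq_integral_Ioo]
  have hRHS : (∫ θ in (-(π/2))..(π/2), c * (r * Real.sin θ) ^ n / (π * (1 - (r * Real.sin θ)^2)))
      = ∫ θ in Ioo (-(π/2)) (π/2), c * (r * Real.sin θ) ^ n / (π * (1 - (r * Real.sin θ)^2)) := by
    rw [intervalIntegral.integral_of_le hab.le, MeasureTheory.integral_Ioc_eq_integral_Ioo]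
  rw [hLHS, hRHS, hchange]
  apply MeasureTheory.setIntegral_congr_fun measurableSet_Ioo
  intro θ hθ
  have hcos : 0 < Real.cos θ := Real.cos_pos_of_mem_Ioo hθ
  have hsq : r^2 - (r * Real.sin θ)^2 = (r * Real.cos θ)^2 := by
    rw [mul_pow, mul_pow, Real.cos_sq']; ring
  have hden : 0 < 1 - (r * Real.sin θ)^2 := by
    have := Real.sin_sq_le_one θ
    nlinarith
  simp only [hg, smul_eq_mul]
  rw [hsq, Real.sqrt_sq (by positivity), abs_of_pos (by positivity)]
  have hπ := Real.pi_pos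
  field_simp

lemma konno_key (r : ℝ) (hr0 : 0 < r) (hr1 : r < 1) (m : ℕ) :
    (∫ x in (-r)..r, x ^ (2*m) *
        (Real.sqrt (1 - r^2) / (Real.pi * (1 - x^2) * Real.sqrt (r^2 - x^2))))
    = 1 - Real.sqrt (1 - r^2) *
        ∑ k ∈ Finset.range m, (Nat.choose (2 * k) k : ℝ) * (r^2 / 4) ^ k := by
  set c := Real.sqrt (1 - r^2) with hc
  have h1r : (0:ℝ) < 1 - r^2 := by nlinarith
  have hcpos : 0 < c := Real.sqrt_pos.mpr h1r
  have hπ := Real.pi_pos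
  have hden : ∀ θ : ℝ, 0 < 1 - (r * Real.sin θ)^2 := by
    intro θ; have := Real.sin_sq_le_one θ; nlinarith
  rw [konno_subst r hr0 hr1 (2*m)]
  have key : ∀ y : ℝ, 1 - y^2 ≠ 0 → c * y ^ (2*m) / (π * (1 - y^2))
      = c/π * (1 - y^2)⁻¹ - c/π * ∑ k ∈ Finset.range m, y ^ (2*k) := by
    intro y h2
    have hgeom : (∑ k ∈ Finset.range m, (y^2)^k) * (y^2 - 1) = (y^2)^m - 1 :=
      geom_sum_mul _ m
    have hS : (∑ k ∈ Finset.range m, y ^ (2*k)) = (1 - y^(2*m))/(1-y^2) := by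
      rw [eq_div_iff h2]
      simp only [pow_mul]
      linear_combination -hgeom
    rw [hS]
    field_simp
    ring
  have heq : ∀ θ : ℝ, c * (r * Real.sin θ) ^ (2*m) / (π * (1 - (r * Real.sin θ)^2))
      = c/π * (1 - (r * Real.sin θ)^2)⁻¹
        - c/π * ∑ k ∈ Finset.range m, (r * Real.sin θ) ^ (2*k) :=
    fun θ => key (r * Real.sin θ) (hden θ).ne'
  simp only [← hc, heq]
  have if1 : IntervalIntegrable (fun θ => c/π * (1 - (r * Real.sin θ)^2)⁻¹)
      volume (-(π/2)) (π/2) := by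
    apply Continuous.intervalIntegrable
    exact continuous_const.mul ((Continuous.inv₀ (by continuity) (fun θ => (hden θ).ne')))
  have if2 : IntervalIntegrable
      (fun θ => c/π * ∑ k ∈ Finset.range m, (r * Real.sin θ) ^ (2*k))
      volume (-(π/2)) (π/2) := by
    apply Continuous.intervalIntegrable
    exact continuous_const.mul (by continuity)
  rw [intervalIntegral.integral_sub if1 if2, intervalIntegral.integral_const_mul,
    intervalIntegral.integral_const_mul, konno_inv_integral r hr0 hr1]
  have hsum : (∫ θ in (-(π/2))..(π/2), ∑ k ∈ Finset.range m, (r * Real.sin θ) ^ (2*k))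
      = ∑ k ∈ Finset.range m, r^(2*k) * (π * (Nat.choose (2*k) k : ℝ) / 4^k) := by
    rw [intervalIntegral.integral_finset_sum]
    · apply Finset.sum_congr rfl
      intro k _
      have : ∀ θ : ℝ, (r * Real.sin θ) ^ (2*k) = r^(2*k) * Real.sin θ ^ (2*k) :=
        fun θ => mul_pow _ _ _
      simp only [this]
      rw [intervalIntegral.integral_const_mul, konno_sin_pow]
    · exact fun k _ => (by continuity : Continuous fun θ : ℝ => (r * Real.sin θ) ^ (2*k)).intervalIntegrable _ _
  rw [hsum]
  rw [Finset.mul_sum, Finset.mul_sum]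
  have hterm : ∀ k ∈ Finset.range m,
      c/π * (r^(2*k) * (π * (Nat.choose (2*k) k : ℝ) / 4^k))
      = c * ((Nat.choose (2*k) k : ℝ) * (r^2/4)^k) := by
    intro k _
    rw [div_pow, ← pow_mul]
    field_simp
  rw [Finset.sum_congr rfl hterm]
  rw [← hc]
  field_simp

theorem konno_even_moments (r : ℝ) (hr0 : 0 < r) (hr1 : r < 1) :
    (∫ x in (-r)..r,
      x ^ (0 : ℕ) *
        (Real.sqrt (1 - r^2) / (Real.pi * (1 - x^2) * Real.sqrt (r^2 - x^2))) = 1) ∧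
    ∀ m : ℕ, 1 ≤ m →
      ∫ x in (-r)..r,
        x ^ (2 * m) *
          (Real.sqrt (1 - r^2) / (Real.pi * (1 - x^2) * Real.sqrt (r^2 - x^2)))
      = 1 - Real.sqrt (1 - r^2) *
          ∑ k ∈ Finset.range m, (Nat.choose (2 * k) k : ℝ) * (r^2 / 4) ^ k := by
  constructor
  · have h := konno_key r hr0 hr1 0
    simpa using h
  · exact fun m _ => konno_key r hr0 hr1 m
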